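/- Let p ≡ 1 (mod 4) be prime, i ∈ 𝔽_p with i² = -1, and let η be the endomorphism of E(𝔽_p), E: y² = x³ - x, given by η(P) = P + [i]P where [i](x,y) = (-x, iy). Then the kernel of η consists exactly of the point at infinity and the point (0, 0). -/

import Mathlib

/-- The elliptic curve `y² = x³ - x` over `ℤ/pℤ`, as a Weierstrass curve in affine coordinates. -/
noncomputable def Ecurve (p : ℕ) : WeierstrassCurve.Affine (ZMod p) :=
  { a₁ := 0, a₂ := 0, a₃ := 0, a₄ := -1, a₆ := 0 }

theorem stmt4 (p : ℕ) [Fact p.Prime] (h4 : p % 4 = 1) (i : ZMod p) (hi : i ^ 2 = -1)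
    (φ : (Ecurve p).Point → (Ecurve p).Point) (hφ0 : φ 0 = 0)
    (hφ : ∀ (x y : ZMod p) (h : (Ecurve p).Nonsingular x y),
      ∃ h' : (Ecurve p).Nonsingular (-x) (i * y),
        φ (WeierstrassCurve.Affine.Point.some _ _ h) = WeierstrassCurve.Affine.Point.some _ _ h')
    (P : (Ecurve p).Point) :
    P + φ P = 0 ↔
      P = 0 ∨ ∃ h₀ : (Ecurve p).Nonsingular 0 0,
        P = WeierstrassCurve.Affine.Point.some _ _ h₀ := by
  have hp : p.Prime := Fact.out
  have hp2 : p ≠ 2 := by omega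
  have h2 : (2 : ZMod p) ≠ 0 := by
    intro h
    have hdvd : p ∣ 2 := (ZMod.natCast_eq_zero_iff 2 p).mp (by exact_mod_cast h)
    exact hp2 ((Nat.prime_dvd_prime_iff_eq hp Nat.prime_two).mp hdvd)
  rw [add_eq_zero_iff_eq_neg]
  cases P with
  | zero =>
      rw [show WeierstrassCurve.Affine.Point.zero = (0 : (Ecurve p).Point) from rfl, hφ0]
      simp
  | some x y h =>
      obtain ⟨h', he⟩ := hφ x y h
      rw [he, WeierstrassCurve.Affine.Point.neg_some, WeierstrassCurve.Affine.Point.some.injEq]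
      constructor
      · rintro ⟨hx, hy⟩
        have hx0 : x = 0 := by
          have : 2 * x = 0 := by
            linear_combination hx
          rcases mul_eq_zero.mp this with h0 | h0
          · exact absurd h0 h2
          · exact h0
        have hy0 : y = 0 := by
          have heq := h.1
          rw [WeierstrassCurve.Affine.equation_iff] at heq
          simp [Ecurve, hx0] at heq
          exact heq
        subst hx0 hy0
        exact Or.inr ⟨h, rfl⟩
      · rintro (h0 | ⟨h₀, h0⟩)
        · exact absurd h0 (by simp)
        · rw [WeierstrassCurve.Affine.Point.some.injEq] at h0
          obtain ⟨hx, hy⟩ := h0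
          subst hx hy
          refine ⟨by ring, ?_⟩
          simp only [WeierstrassCurve.Affine.negY, Ecurve]
          ring
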